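/- Let P(z) = Σ_{j=0}^{s} (-1)^j γ_j (z^j − z^{N+s+1−j}) with γ_0 = 1, real γ_j, and 0 ≤ s ≤ N. If all zeros of P lie on the unit circle, then |γ_j| ≤ C(s,j) · C(N+s+1, j) / C(N, j) for every j = 1, …, s. -/

import Mathlib

open Finset

namespace Stmt8Aux

open Polynomial

lemma eval_msum (w : ℂ) (m : Multiset ℂ[X]) : (m.sum).eval w = (m.map (eval w)).sum :=
  map_multiset_sum (evalRingHom w) m

lemma norm_multiset_prod_le_one {t : Multiset ℂ} (ht : ∀ r ∈ t, ‖r‖ ≤ 1) : ‖t.prod‖ ≤ 1 := by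
  induction t using Multiset.induction_on with
  | empty => simp
  | cons a t ih =>
    rw [Multiset.prod_cons, norm_mul]
    have h1 := ht a (Multiset.mem_cons_self a t)
    have h2 := ih fun r hr => ht r (Multiset.mem_cons_of_mem hr)
    calc ‖a‖ * ‖t.prod‖ ≤ 1 * 1 := mul_le_mul h1 h2 (norm_nonneg _) zero_le_one
      _ = 1 := one_mul 1

/-- One step of Gauss–Lucas for the closed unit disc. -/
lemma gl_step (p : ℂ[X]) (hdeg : 0 < p.natDegree)
    (hb : ∀ z : ℂ, p.eval z = 0 → ‖z‖ ≤ 1) :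
    ∀ z : ℂ, (derivative p).eval z = 0 → ‖z‖ ≤ 1 := by
  classical
  intro w hw
  by_cases hpw : p.eval w = 0
  · exact hb w hpw
  have hp0 : p ≠ 0 := by
    intro h; rw [h] at hdeg; simp at hdeg
  have hsplit : Splits p := IsAlgClosed.splits p
  have hcard : Multiset.card p.roots = p.natDegree := by
    simpa using hsplit.natDegree_eq_card_roots.symm
  have hfact : p = C p.leadingCoeff * (p.roots.map fun a => X - C a).prod :=
    hsplit.eq_prod_roots
  have hlc : p.leadingCoeff ≠ 0 := leadingCoeff_ne_zero.mpr hp0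
  have hroots : ∀ r ∈ p.roots, ‖r‖ ≤ 1 := fun r hr => hb r ((mem_roots'.mp hr).2)
  set R : Multiset ℂ := p.roots with hR
  -- the value of the product at w
  have hevalprod : ∀ T : Multiset ℂ, ((T.map fun a => X - C a).prod).eval w
      = (T.map fun a => w - a).prod := by
    intro T
    rw [eval_multiset_prod, Multiset.map_map]
    congr 1
    apply Multiset.map_congr rfl
    intro a _
    simp
  have hPw : ((R.map fun a => w - a)).prod ≠ 0 := by
    intro h0
    apply hpw
    rw [hfact, eval_mul, hevalprod, h0, mul_zero]
  have hwr : ∀ r ∈ R, w - r ≠ 0 := by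
    intro r hr h0
    apply hPw
    apply Multiset.prod_eq_zero
    rw [← h0]
    exact Multiset.mem_map_of_mem _ hr
  -- derivative vanishes
  have hD : (derivative ((R.map fun a => X - C a).prod)).eval w = 0 := by
    have hdp : derivative p = C p.leadingCoeff * derivative ((R.map fun a => X - C a).prod) := by
      conv_lhs => rw [hfact]
      rw [derivative_mul, derivative_C, zero_mul, zero_add]
    rw [hdp, eval_mul] at hw
    rcases mul_eq_zero.mp hw with h | h
    · exact absurd h (by simpa using hlc)
    · exact h
  -- sum over roots of partial products is zero
  have hsum0 : (R.map fun r => ((R.erase r).map fun a => w - a).prod).sum = 0 := by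
    have hdp := derivative_prod (s := R) (f := fun a => (X : ℂ[X]) - C a)
    rw [hdp, eval_msum, Multiset.map_map] at hD
    rw [← hD]
    apply congrArg Multiset.sum
    apply Multiset.map_congr rfl
    intro r hr
    simp [hevalprod]
  -- rewrite each partial product
  have hpart : ∀ r ∈ R, ((R.erase r).map fun a => w - a).prod
      = (w - r)⁻¹ * (R.map fun a => w - a).prod := by
    intro r hr
    have : (R.map fun a => w - a).prod = (w - r) * ((R.erase r).map fun a => w - a).prod := by
      conv_lhs => rw [← Multiset.cons_erase hr]
      rw [Multiset.map_cons, Multiset.prod_cons]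
    rw [this, inv_mul_cancel_left₀ (hwr r hr)]
  have hS : (R.map fun r => (w - r)⁻¹).sum = 0 := by
    have h1 : (R.map fun r => ((R.erase r).map fun a => w - a).prod).sum
        = (R.map fun r => (w - r)⁻¹).sum * (R.map fun a => w - a).prod := by
      rw [← Multiset.sum_map_mul_right]
      exact congrArg Multiset.sum (Multiset.map_congr rfl hpart)
    rw [h1] at hsum0
    rcases mul_eq_zero.mp hsum0 with h | h
    · exact h
    · exact absurd h hPw
  -- the weights
  set u : ℂ → ℝ := fun r => (Complex.normSq (w - r))⁻¹ with hu
  have hupos : ∀ r ∈ R, 0 < u r := by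
    intro r hr
    exact inv_pos.mpr (Complex.normSq_pos.mpr (hwr r hr))
  have hconj : (R.map fun r => (w - r) * (u r : ℂ)).sum = 0 := by
    have h1 : (R.map fun r => (w - r) * (u r : ℂ)).sum
        = (starRingEnd ℂ) ((R.map fun r => (w - r)⁻¹).sum) := by
      rw [map_multiset_sum, Multiset.map_map]
      apply congrArg Multiset.sum
      apply Multiset.map_congr rfl
      intro r _
      simp only [Function.comp_apply, Complex.inv_def, map_mul, Complex.conj_conj,
        Complex.conj_ofReal, hu]
    rw [h1, hS, map_zero]
  -- separate into two sums
  have hsep : w * ((R.map fun r => ((u r : ℝ) : ℂ)).sum) = (R.map fun r => r * (u r : ℂ)).sum := by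
    have h1 : (R.map fun r => (w - r) * (u r : ℂ)).sum
        = (R.map fun r => w * (u r : ℂ)).sum - (R.map fun r => r * (u r : ℂ)).sum := by
      rw [← Multiset.sum_map_sub]
      congr 1
      apply Multiset.map_congr rfl
      intro r _
      ring
    rw [h1] at hconj
    rw [← Multiset.sum_map_mul_left]
    linear_combination hconj
  set Ur : ℝ := (R.map u).sum with hUr
  have hcast : (R.map fun r => ((u r : ℝ) : ℂ)).sum = (Ur : ℂ) := by
    rw [hUr]
    rw [← Complex.ofRealHom_eq_coe, map_multiset_sum, Multiset.map_map]
    rfl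
  have hRne : R ≠ 0 := by
    intro h0
    rw [h0] at hcard
    simp at hcard
    omega
  have hUrpos : 0 < Ur := by
    obtain ⟨r0, hr0⟩ := Multiset.exists_mem_of_ne_zero hRne
    have : Ur = u r0 + ((R.erase r0).map u).sum := by
      rw [hUr]
      conv_lhs => rw [← Multiset.cons_erase hr0]
      rw [Multiset.map_cons, Multiset.sum_cons]
    rw [this]
    have h1 : 0 ≤ ((R.erase r0).map u).sum := by
      apply Multiset.sum_nonneg
      intro x hx
      obtain ⟨r, hr, rfl⟩ := Multiset.mem_map.mp hx
      exact (hupos r (Multiset.mem_of_mem_erase hr)).le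
    have h2 := hupos r0 hr0
    linarith
  -- conclude
  have hineq : ‖w‖ * Ur ≤ Ur := by
    have h1 : ‖w‖ * Ur = ‖w * (Ur : ℂ)‖ := by
      rw [norm_mul, Complex.norm_real, Real.norm_eq_abs, abs_of_pos hUrpos]
    rw [h1, ← hcast, hsep]
    calc ‖(R.map fun r => r * (u r : ℂ)).sum‖
        ≤ ((R.map fun r => r * (u r : ℂ)).map norm).sum := norm_multiset_sum_le _
      _ = (R.map fun r => ‖r * (u r : ℂ)‖).sum := by rw [Multiset.map_map]; rfl
      _ ≤ (R.map u).sum := by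
          apply Multiset.sum_map_le_sum_map
          intro r hr
          rw [norm_mul, Complex.norm_real, Real.norm_eq_abs, abs_of_pos (hupos r hr)]
          calc ‖r‖ * u r ≤ 1 * u r :=
                mul_le_mul_of_nonneg_right (hroots r hr) (hupos r hr).le
            _ = u r := one_mul _
  have h2 : ‖w‖ * Ur ≤ 1 * Ur := by rw [one_mul]; exact hineq
  exact le_of_mul_le_mul_right h2 hUrpos

lemma natDegree_iter (p : ℂ[X]) : ∀ m : ℕ, m ≤ p.natDegree →
    (derivative^[m] p).natDegree = p.natDegree - m := by
  intro m
  induction m with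
  | zero => simp
  | succ k ih =>
    intro hk
    have hk' : k ≤ p.natDegree := by omega
    have h1 := ih hk'
    have hpos : 0 < (derivative^[k] p).natDegree := by omega
    rw [Function.iterate_succ_apply']
    have := degree_derivative_eq (derivative^[k] p) hpos
    have h2 := natDegree_eq_of_degree_eq_some this
    rw [h2, h1]
    omega

lemma gl_iter (p : ℂ[X]) (hb : ∀ z : ℂ, p.eval z = 0 → ‖z‖ ≤ 1) :
    ∀ k, k ≤ p.natDegree → ∀ z : ℂ, (derivative^[k] p).eval z = 0 → ‖z‖ ≤ 1 := by
  intro k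
  induction k with
  | zero => intro _ z hz; exact hb z (by simpa using hz)
  | succ m ih =>
    intro hm z hz
    have hm' : m ≤ p.natDegree := by omega
    have hdeg : 0 < (derivative^[m] p).natDegree := by
      rw [natDegree_iter p m hm']; omega
    rw [Function.iterate_succ_apply'] at hz
    exact gl_step (derivative^[m] p) hdeg (ih hm') z hz

/-- Vieta-type coefficient bound for polynomials with roots in the closed unit disc. -/
lemma coeff_le (q : ℂ[X]) (hq : q ≠ 0)
    (hb : ∀ z : ℂ, q.eval z = 0 → ‖z‖ ≤ 1) (j : ℕ) (hj : j ≤ q.natDegree) :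
    ‖q.coeff (q.natDegree - j)‖ ≤ (q.natDegree.choose j : ℝ) * ‖q.leadingCoeff‖ := by
  classical
  have hsplit : Splits q := IsAlgClosed.splits q
  have hcard : Multiset.card q.roots = q.natDegree := by
    simpa using hsplit.natDegree_eq_card_roots.symm
  have hfact : q = C q.leadingCoeff * (q.roots.map fun a => X - C a).prod :=
    hsplit.eq_prod_roots
  have hroots : ∀ r ∈ q.roots, ‖r‖ ≤ 1 := fun r hr => hb r ((mem_roots'.mp hr).2)
  have hk : q.natDegree - j ≤ Multiset.card q.roots := by omega
  have hj' : Multiset.card q.roots - (q.natDegree - j) = j := by omega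
  have hcoeff : ((q.roots.map fun a => X - C a).prod).coeff (q.natDegree - j)
      = (-1) ^ j * q.roots.esymm j := by
    rw [Multiset.prod_X_sub_C_coeff q.roots hk, hj']
  have hesymm : ‖q.roots.esymm j‖ ≤ (q.natDegree.choose j : ℝ) := by
    rw [Multiset.esymm]
    refine le_trans (norm_multiset_sum_le _) ?_
    rw [Multiset.map_map]
    calc ((q.roots.powersetCard j).map fun t => ‖t.prod‖).sum
        ≤ ((q.roots.powersetCard j).map fun _ => (1:ℝ)).sum := by
          apply Multiset.sum_map_le_sum_map
          intro t ht
          obtain ⟨hle, _⟩ := (Multiset.mem_powersetCard).mp ht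
          exact norm_multiset_prod_le_one fun r hr => hroots r (Multiset.mem_of_le hle hr)
      _ = (Multiset.card (q.roots.powersetCard j) : ℝ) := by
          rw [Multiset.map_const', Multiset.sum_replicate, nsmul_eq_mul, mul_one]
      _ = (q.natDegree.choose j : ℝ) := by
          rw [Multiset.card_powersetCard, hcard]
  have hco : q.coeff (q.natDegree - j) = q.leadingCoeff * ((-1)^j * q.roots.esymm j) := by
    rw [← hcoeff, ← coeff_C_mul, ← hfact]
  rw [hco, norm_mul, norm_mul, norm_pow, norm_neg, norm_one, one_pow, one_mul, mul_comm]
  exact mul_le_mul_of_nonneg_right hesymm (norm_nonneg _)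

lemma iter_deriv_sum {ι : Type*} (t : Finset ι) (f : ι → ℂ[X]) (m : ℕ) :
    derivative^[m] (∑ i ∈ t, f i) = ∑ i ∈ t, derivative^[m] (f i) := by
  induction m with
  | zero => simp
  | succ k ih =>
    rw [Function.iterate_succ_apply', ih, derivative_sum]
    exact Finset.sum_congr rfl fun i _ => (Function.iterate_succ_apply' _ _ _).symm

end Stmt8Aux

open Stmt8Aux Polynomial in
/-- If all zeros of `P(z) = ∑_{j=0}^s (-1)^j γ_j (z^j - z^{N+s+1-j})`, `γ₀ = 1`, lie
on the unit circle, then `|γ_j| ≤ C(s,j) C(N+s+1,j) / C(N,j)` for `j = 1, …, s`. -/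
theorem stmt8 (N s : ℕ) (hs : s ≤ N) (γ : ℕ → ℝ) (hγ0 : γ 0 = 1)
    (h : ∀ z : ℂ,
      ∑ j ∈ Finset.range (s + 1),
          (-1 : ℂ) ^ j * (γ j : ℂ) * (z ^ j - z ^ (N + s + 1 - j)) = 0 → ‖z‖ = 1)
    (j : ℕ) (h1 : 1 ≤ j) (hj : j ≤ s) :
    |γ j| ≤ (s.choose j * (N + s + 1).choose j : ℝ) / (N.choose j) := by
  classical
  have hs1 : 1 ≤ s := le_trans h1 hj
  set n := N + s + 1 with hn
  set P : ℂ[X] := ∑ k ∈ Finset.range (s+1),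
      C ((-1)^k * (γ k : ℂ)) * (X^k - X^(n - k)) with hP
  have hPz : ∀ z : ℂ, P.eval z = 0 → ‖z‖ ≤ 1 := by
    intro z hz
    apply le_of_eq
    apply h z
    rw [hP, eval_finset_sum] at hz
    rw [← hz]
    apply Finset.sum_congr rfl
    intro k _
    simp [mul_assoc]
  have hn0 : n ≠ 0 := by omega
  have hPcoeffn : P.coeff n = -1 := by
    rw [hP, finset_sum_coeff]
    rw [Finset.sum_eq_single 0]
    · rw [coeff_C_mul, coeff_sub, coeff_X_pow, coeff_X_pow, if_neg hn0,
        if_pos (Nat.sub_zero n).symm, hγ0]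
      norm_num
    · intro k hk hk0
      have hk' : k ≤ s := by simpa [Nat.lt_succ_iff] using hk
      have e1 : ¬ (n = k) := by omega
      have e2 : ¬ (n = n - k) := by omega
      rw [coeff_C_mul, coeff_sub, coeff_X_pow, coeff_X_pow, if_neg e1, if_neg e2]
      simp
    · intro habs
      exact absurd (Finset.mem_range.mpr (by omega)) habs
  have hPdegle : P.natDegree ≤ n := by
    rw [hP]
    apply natDegree_sum_le_of_forall_le
    intro k hk
    have hk' : k ≤ s := by simpa [Nat.lt_succ_iff] using hk
    calc (C ((-1)^k * (γ k : ℂ)) * (X^k - X^(n - k))).natDegree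
        ≤ (C ((-1)^k * (γ k : ℂ))).natDegree + ((X:ℂ[X])^k - X^(n - k)).natDegree :=
          natDegree_mul_le
      _ ≤ 0 + max ((X:ℂ[X])^k).natDegree ((X:ℂ[X])^(n-k)).natDegree := by
          rw [natDegree_C]
          exact Nat.add_le_add_left (natDegree_sub_le _ _) 0
      _ ≤ n := by
          rw [natDegree_X_pow, natDegree_X_pow]
          simp
          omega
  have hPdeg : P.natDegree = n := by
    apply le_antisymm hPdegle
    apply le_natDegree_of_ne_zero
    rw [hPcoeffn]
    norm_num
  set d : ℕ → ℕ := fun k => (n - k).descFactorial (s+1) with hd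
  set Q : ℂ[X] := ∑ k ∈ Finset.range (s+1),
      C (-((-1)^k * (γ k : ℂ) * (d k : ℂ))) * X^(s-k) with hQ
  have hDQ : derivative^[s+1] P = X^(N-s) * Q := by
    rw [hP, iter_deriv_sum, hQ, Finset.mul_sum]
    apply Finset.sum_congr rfl
    intro k hk
    have hk' : k ≤ s := by simpa [Nat.lt_succ_iff] using hk
    rw [iterate_derivative_C_mul, iterate_derivative_sub,
      iterate_derivative_X_pow_eq_C_mul, iterate_derivative_X_pow_eq_C_mul]
    have h0 : ((Nat.descFactorial k (s+1) : ℕ) : ℂ) = 0 := by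
      rw [Nat.descFactorial_of_lt (by omega)]
      simp
    rw [h0]
    have he1 : n - k - (s+1) = s - k + (N - s) := by omega
    rw [he1, pow_add]
    have hdk : ((d k : ℕ) : ℂ) = ((Nat.descFactorial (n - k) (s+1) : ℕ) : ℂ) := by rw [hd]
    rw [← hdk]
    simp only [map_neg, map_mul, map_zero]
    ring
  have hd0ne : (d 0 : ℂ) ≠ 0 := by
    have : d 0 ≠ 0 := by
      rw [hd]
      simp only
      intro h0
      have := Nat.descFactorial_eq_zero_iff_lt.mp h0
      omega
    exact_mod_cast this
  have hQcoeffs : Q.coeff s = -(d 0 : ℂ) := by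
    rw [hQ, finset_sum_coeff]
    rw [Finset.sum_eq_single 0]
    · rw [coeff_C_mul, coeff_X_pow, if_pos (Nat.sub_zero s).symm, hγ0]
      norm_num
    · intro k hk hk0
      have hk' : k ≤ s := by simpa [Nat.lt_succ_iff] using hk
      have e1 : ¬ (s = s - k) := by omega
      rw [coeff_C_mul, coeff_X_pow, if_neg e1, mul_zero]
    · intro habs
      exact absurd (Finset.mem_range.mpr (by omega)) habs
  have hQcoeffj : Q.coeff (s - j) = -((-1)^j * (γ j : ℂ) * (d j : ℂ)) := by
    rw [hQ, finset_sum_coeff]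
    rw [Finset.sum_eq_single j]
    · rw [coeff_C_mul, coeff_X_pow, if_pos rfl, mul_one]
    · intro k hk hkj
      have hk' : k ≤ s := by simpa [Nat.lt_succ_iff] using hk
      have e1 : ¬ (s - j = s - k) := by omega
      rw [coeff_C_mul, coeff_X_pow, if_neg e1, mul_zero]
    · intro habs
      exact absurd (Finset.mem_range.mpr (by omega)) habs
  have hQne : Q ≠ 0 := by
    intro h0
    rw [h0, coeff_zero] at hQcoeffs
    exact hd0ne (by rw [← neg_eq_zero]; exact hQcoeffs.symm)
  have hQdeg : Q.natDegree = s := by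
    apply le_antisymm
    · rw [hQ]
      apply natDegree_sum_le_of_forall_le
      intro k hk
      have hk' : k ≤ s := by simpa [Nat.lt_succ_iff] using hk
      calc (C (-((-1)^k * (γ k : ℂ) * (d k : ℂ))) * X^(s-k)).natDegree
          ≤ (C (-((-1)^k * (γ k : ℂ) * (d k : ℂ)))).natDegree + ((X:ℂ[X])^(s-k)).natDegree :=
            natDegree_mul_le
        _ ≤ s := by
            rw [natDegree_C, natDegree_X_pow]
            omega
    · apply le_natDegree_of_ne_zero
      rw [hQcoeffs]
      exact neg_ne_zero.mpr hd0ne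
  have hQlead : Q.leadingCoeff = -(d 0 : ℂ) := by
    rw [Polynomial.leadingCoeff, hQdeg, hQcoeffs]
  have hQroots : ∀ z : ℂ, Q.eval z = 0 → ‖z‖ ≤ 1 := by
    intro z hz
    have hz' : (derivative^[s+1] P).eval z = 0 := by
      rw [hDQ, eval_mul, hz, mul_zero]
    exact gl_iter P hPz (s+1) (by rw [hPdeg]; omega) z hz'
  have hmain := coeff_le Q hQne hQroots j (by rw [hQdeg]; omega)
  rw [hQdeg, hQcoeffj, hQlead] at hmain
  have hnorm1 : ‖-((-1:ℂ)^j * (γ j : ℂ) * (d j : ℂ))‖ = |γ j| * (d j : ℝ) := by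
    rw [norm_neg, norm_mul, norm_mul, norm_pow, norm_neg, norm_one, one_pow, one_mul,
      Complex.norm_real, Real.norm_eq_abs, Complex.norm_natCast]
  have hnorm2 : ‖-((d 0 : ℕ) : ℂ)‖ = (d 0 : ℝ) := by
    rw [norm_neg, Complex.norm_natCast]
  rw [hnorm1, hnorm2] at hmain
  -- the arithmetic identity d 0 * C(N,j) = d j * C(n,j)
  have e1 : Nat.factorial N * d 0 = Nat.factorial n := by
    have h2 := Nat.factorial_mul_descFactorial (show s+1 ≤ n by omega)
    rw [show n - (s+1) = N by omega] at h2
    simpa [hd] using h2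
  have e2 : Nat.factorial (N - j) * d j = Nat.factorial (n - j) := by
    have h2 := Nat.factorial_mul_descFactorial (show s+1 ≤ n - j by omega)
    rw [show n - j - (s+1) = N - j by omega] at h2
    simpa [hd] using h2
  have e3 := Nat.choose_mul_factorial_mul_factorial (show j ≤ N by omega)
  have e4 := Nat.choose_mul_factorial_mul_factorial (show j ≤ n by omega)
  have key : d 0 * N.choose j = d j * n.choose j := by
    have h5 : (d 0 * N.choose j) * (Nat.factorial j * Nat.factorial (N - j)) =
        (d j * n.choose j) * (Nat.factorial j * Nat.factorial (N - j)) := by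
      calc (d 0 * N.choose j) * (Nat.factorial j * Nat.factorial (N-j))
          = d 0 * (N.choose j * Nat.factorial j * Nat.factorial (N-j)) := by ring
        _ = d 0 * Nat.factorial N := by rw [e3]
        _ = Nat.factorial n := by rw [← e1]; ring
        _ = n.choose j * Nat.factorial j * Nat.factorial (n - j) := e4.symm
        _ = n.choose j * Nat.factorial j * (Nat.factorial (N-j) * d j) := by rw [e2]
        _ = (d j * n.choose j) * (Nat.factorial j * Nat.factorial (N-j)) := by ring
    exact Nat.eq_of_mul_eq_mul_right
      (Nat.mul_pos (Nat.factorial_pos _) (Nat.factorial_pos _)) h5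
  have hkeyR : (d 0 : ℝ) * (N.choose j : ℝ) = (d j : ℝ) * (n.choose j : ℝ) := by
    exact_mod_cast congrArg (fun x : ℕ => (x : ℝ)) key
  have hdj_pos : (0:ℝ) < (d j : ℝ) := by
    have hdj : d j ≠ 0 := by
      rw [hd]
      simp only
      intro h0
      have := Nat.descFactorial_eq_zero_iff_lt.mp h0
      omega
    exact_mod_cast Nat.pos_of_ne_zero hdj
  have hCNj_pos : (0:ℝ) < (N.choose j : ℝ) := by
    exact_mod_cast Nat.choose_pos (show j ≤ N by omega)
  rw [le_div_iff₀ hCNj_pos]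
  have h2 : |γ j| * ((d j:ℝ) * (N.choose j:ℝ)) ≤ (s.choose j:ℝ) * ((d j:ℝ) * (n.choose j:ℝ)) := by
    calc |γ j| * ((d j:ℝ) * (N.choose j:ℝ)) = (|γ j| * (d j:ℝ)) * (N.choose j:ℝ) := by ring
      _ ≤ ((s.choose j:ℝ) * (d 0:ℝ)) * (N.choose j:ℝ) :=
          mul_le_mul_of_nonneg_right hmain hCNj_pos.le
      _ = (s.choose j:ℝ) * ((d 0:ℝ) * (N.choose j:ℝ)) := by ring
      _ = (s.choose j:ℝ) * ((d j:ℝ) * (n.choose j:ℝ)) := by rw [hkeyR]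
  have h2' : (d j:ℝ) * (|γ j| * (N.choose j:ℝ)) ≤ (d j:ℝ) * ((s.choose j:ℝ) * (n.choose j:ℝ)) := by
    nlinarith [h2]
  have h3 := le_of_mul_le_mul_left h2' hdj_pos
  calc |γ j| * (N.choose j : ℝ) ≤ (s.choose j:ℝ) * (n.choose j:ℝ) := h3
    _ = (s.choose j * n.choose j : ℝ) := by push_cast; ring
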